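/- Let T, S : ℝⁿ → ℝⁿ be nonzero linear maps. If g_T ⇝ g_S (g_S is a contraction of g_T), then S lies in the closure of C(T) \ {0} in M_n(ℝ). -/

import Mathlib

open Filter Topology

/-- `bg₀` (a bracket on `W`) is a contraction of `bg` (a bracket on `V`). -/
def IsContractionOf {V W : Type*} [AddCommGroup V] [Module ℝ V]
    [AddCommGroup W] [Module ℝ W] [TopologicalSpace W]
    (bg : V → V → V) (bg₀ : W → W → W) : Prop :=
  ∃ I : Set ℝ, (𝓝[I \ {0}] (0 : ℝ)).NeBot ∧
    ∃ C : ℝ → (W ≃ₗ[ℝ] V), ∀ x y : W,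
      Tendsto (fun r => (C r).symm (bg (C r x) (C r y))) (𝓝[I \ {0}] (0 : ℝ)) (𝓝 (bg₀ x y))

/-- The bracket of the semidirect product Lie algebra `g_T = ℝ ⋉_T ℝⁿ`:
`[(a, v), (b, w)] = (0, a • T w - b • T v)`. -/
noncomputable def gTBracket {n : ℕ} (T : Matrix (Fin n) (Fin n) ℝ) :
    (ℝ × (Fin n → ℝ)) → (ℝ × (Fin n → ℝ)) → (ℝ × (Fin n → ℝ)) :=
  fun x y => (0, x.1 • T.mulVec y.2 - y.1 • T.mulVec x.2)

/-- The similarity orbit `S(T) = {A T A⁻¹ : A ∈ GL(n, ℝ)}`. -/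
def simOrbit {n : ℕ} (T : Matrix (Fin n) (Fin n) ℝ) : Set (Matrix (Fin n) (Fin n) ℝ) :=
  {S | ∃ A : Matrix (Fin n) (Fin n) ℝ, IsUnit A ∧ S = A * T * A⁻¹}

/-- The double cone `C(T) = ⋃_{λ ∈ ℝ} λ • S(T)` generated by the similarity orbit. -/
def doubleCone {n : ℕ} (T : Matrix (Fin n) (Fin n) ℝ) : Set (Matrix (Fin n) (Fin n) ℝ) :=
  {S | ∃ lam : ℝ, ∃ X ∈ simOrbit T, S = lam • X}

/-- The two brackets are isomorphic as Lie algebras: there is an invertible linear map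
intertwining them. -/
def BracketIso {V W : Type*} [AddCommGroup V] [Module ℝ V] [AddCommGroup W] [Module ℝ W]
    (bv : V → V → V) (bw : W → W → W) : Prop :=
  ∃ D : V ≃ₗ[ℝ] W, ∀ x y : V, D (bv x y) = bw (D x) (D y)

namespace AuxContraction

open Matrix

variable {n : ℕ}

abbrev Vn (n : ℕ) := ℝ × (Fin n → ℝ)

lemma toMatrix'_apply_single (f : (Fin n → ℝ) →ₗ[ℝ] (Fin n → ℝ)) (i j : Fin n) :
    LinearMap.toMatrix' f i j = f (Pi.single j 1) i := by
  rw [LinearMap.toMatrix'_apply]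

lemma toMatrix'_mulVecLin (T : Matrix (Fin n) (Fin n) ℝ) :
    LinearMap.toMatrix' T.mulVecLin = T := by
  ext i j
  rw [toMatrix'_apply_single, Matrix.mulVecLin_apply, Matrix.mulVec_single]
  simp

/-- The right-bracket map `y ↦ [x, y]` as a linear map. -/
noncomputable def brR (T : Matrix (Fin n) (Fin n) ℝ) (x : Vn n) : Vn n →ₗ[ℝ] Vn n :=
  LinearMap.inr ℝ ℝ (Fin n → ℝ) ∘ₗ
    (x.1 • (T.mulVecLin ∘ₗ LinearMap.snd ℝ ℝ (Fin n → ℝ)) -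
      LinearMap.toSpanSingleton ℝ (Fin n → ℝ) (T *ᵥ x.2) ∘ₗ LinearMap.fst ℝ ℝ (Fin n → ℝ))

@[simp] lemma brR_apply (T : Matrix (Fin n) (Fin n) ℝ) (x y : Vn n) :
    brR T x y = gTBracket T x y := by
  simp [brR, gTBracket, LinearMap.toSpanSingleton_apply]

lemma gT_self (T : Matrix (Fin n) (Fin n) ℝ) (x : Vn n) : gTBracket T x x = 0 := by
  simp [gTBracket]

/-- The matrix of the contracted bracket `w ↦ (E⁻¹[E(1,0), E(0,w)]).2`. -/
noncomputable def MlinOf (T : Matrix (Fin n) (Fin n) ℝ) (E : Vn n ≃ₗ[ℝ] Vn n) :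
    (Fin n → ℝ) →ₗ[ℝ] (Fin n → ℝ) :=
  LinearMap.snd ℝ ℝ (Fin n → ℝ) ∘ₗ E.symm.toLinearMap ∘ₗ brR T (E (1, 0)) ∘ₗ
    E.toLinearMap ∘ₗ LinearMap.inr ℝ ℝ (Fin n → ℝ)

lemma MlinOf_apply (T : Matrix (Fin n) (Fin n) ℝ) (E : Vn n ≃ₗ[ℝ] Vn n) (w : Fin n → ℝ) :
    MlinOf T E w = (E.symm (gTBracket T (E (1, 0)) (E (0, w)))).2 := by
  simp [MlinOf]

noncomputable def DlinOf (E : Vn n ≃ₗ[ℝ] Vn n) : (Fin n → ℝ) →ₗ[ℝ] (Fin n → ℝ) :=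
  LinearMap.snd ℝ ℝ (Fin n → ℝ) ∘ₗ E.symm.toLinearMap ∘ₗ LinearMap.inr ℝ ℝ (Fin n → ℝ)

lemma DlinOf_apply (E : Vn n ≃ₗ[ℝ] Vn n) (z : Fin n → ℝ) :
    DlinOf E z = (E.symm (0, z)).2 := by
  simp [DlinOf]

lemma key1 (E : Vn n ≃ₗ[ℝ] Vn n) (z : Fin n → ℝ) :
    E (0, DlinOf E z) = (0, z) - ((E.symm (0, z)).1) • E (1, 0) := by
  have h : ((0, DlinOf E z) : Vn n)
      = E.symm (0, z) - ((E.symm (0, z)).1) • ((1 : ℝ), (0 : Fin n → ℝ)) := by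
    rw [Prod.ext_iff]
    refine ⟨?_, ?_⟩
    · simp
    · simp [DlinOf_apply]
  rw [h, map_sub, _root_.map_smul, E.apply_symm_apply]

end AuxContraction

section CaseLemmas

open Matrix AuxContraction

variable {n : ℕ}

lemma caseA (T : Matrix (Fin n) (Fin n) ℝ) (hT : T ≠ 0) (E : Vn n ≃ₗ[ℝ] Vn n)
    (ha : (E (1, 0)).1 ≠ 0) :
    LinearMap.toMatrix' (MlinOf T E) ∈ doubleCone T \ {0} := by
  set a := (E (1, 0)).1 with ha'
  have comp1 : MlinOf T E ∘ₗ DlinOf E = a • (DlinOf E ∘ₗ T.mulVecLin) := by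
    apply LinearMap.ext
    intro z
    have hb : gTBracket T (E (1, 0)) (E (0, DlinOf E z)) = a • ((0 : ℝ), T *ᵥ z) := by
      rw [← brR_apply, key1, map_sub, _root_.map_smul]
      rw [brR_apply, brR_apply, gT_self, smul_zero, sub_zero]
      simp [gTBracket, Prod.smul_mk]
      rfl
    simp only [LinearMap.comp_apply, LinearMap.smul_apply]
    rw [MlinOf_apply, hb, _root_.map_smul]
    rw [Matrix.mulVecLin_apply, Prod.smul_snd, DlinOf_apply]
  have hinj : Function.Injective (DlinOf E) := by
    rw [injective_iff_map_eq_zero]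
    intro z hz0
    have h3 : E.symm (0, z) = ((E.symm (0, z)).1) • ((1 : ℝ), (0 : Fin n → ℝ)) := by
      rw [Prod.ext_iff]
      refine ⟨?_, ?_⟩
      · simp
      · rw [show (E.symm ((0:ℝ), z)).2 = DlinOf E z from (DlinOf_apply E z).symm, hz0]
        simp
    have h2 : ((0, z) : Vn n) = ((E.symm (0, z)).1) • E (1, 0) := by
      calc ((0, z) : Vn n) = E (E.symm (0, z)) := (E.apply_symm_apply _).symm
        _ = E (((E.symm (0, z)).1) • ((1 : ℝ), (0 : Fin n → ℝ))) := by rw [← h3]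
        _ = ((E.symm (0, z)).1) • E (1, 0) := by rw [_root_.map_smul]
    have h4 : (0 : ℝ) = (E.symm (0, z)).1 * a := by
      have := congrArg Prod.fst h2
      simpa [smul_eq_mul] using this
    have h5 : (E.symm (0, z)).1 = 0 := by
      rcases mul_eq_zero.mp h4.symm with h | h
      · exact h
      · exact absurd h ha
    have h6 : ((0, z) : Vn n) = 0 := by rw [h2, h5, zero_smul]
    exact congrArg Prod.snd h6
  have hbij : Function.Bijective (DlinOf E) :=
    ⟨hinj, LinearMap.injective_iff_surjective.mp hinj⟩
  set Dm := LinearMap.toMatrix' (DlinOf E) with hDm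
  let Deq := LinearEquiv.ofBijective (DlinOf E) hbij
  have hcoe : (Deq : (Fin n → ℝ) →ₗ[ℝ] (Fin n → ℝ)) = DlinOf E := rfl
  have h1 : Dm * LinearMap.toMatrix' (Deq.symm.toLinearMap) = 1 := by
    rw [hDm, ← LinearMap.toMatrix'_comp]
    have hcomp : DlinOf E ∘ₗ Deq.symm.toLinearMap = LinearMap.id := by
      apply LinearMap.ext
      intro z
      show DlinOf E (Deq.symm z) = z
      exact Deq.apply_symm_apply z
    rw [hcomp, LinearMap.toMatrix'_id]
  have h2 : LinearMap.toMatrix' (Deq.symm.toLinearMap) * Dm = 1 := by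
    rw [hDm, ← LinearMap.toMatrix'_comp]
    have hcomp : Deq.symm.toLinearMap ∘ₗ DlinOf E = LinearMap.id := by
      apply LinearMap.ext
      intro z
      show Deq.symm (DlinOf E z) = z
      exact Deq.symm_apply_apply z
    rw [hcomp, LinearMap.toMatrix'_id]
  have hU : IsUnit Dm := (Matrix.isUnit_iff_isUnit_det _).mpr (Matrix.isUnit_det_of_right_inverse h1)
  have hDinv : Dm⁻¹ = LinearMap.toMatrix' (Deq.symm.toLinearMap) := Matrix.inv_eq_right_inv h1
  have hMD : LinearMap.toMatrix' (MlinOf T E) * Dm = a • (Dm * T) := by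
    rw [hDm, ← LinearMap.toMatrix'_comp, comp1, _root_.map_smul, LinearMap.toMatrix'_comp,
      toMatrix'_mulVecLin]
  have hDD : Dm * Dm⁻¹ = 1 := by rw [hDinv]; exact h1
  have hDD' : Dm⁻¹ * Dm = 1 := by rw [hDinv]; exact h2
  have hmat : LinearMap.toMatrix' (MlinOf T E) = a • (Dm * T * Dm⁻¹) := by
    calc LinearMap.toMatrix' (MlinOf T E)
        = LinearMap.toMatrix' (MlinOf T E) * (Dm * Dm⁻¹) := by rw [hDD, mul_one]
      _ = (LinearMap.toMatrix' (MlinOf T E) * Dm) * Dm⁻¹ := by rw [mul_assoc]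
      _ = (a • (Dm * T)) * Dm⁻¹ := by rw [hMD]
      _ = a • (Dm * T * Dm⁻¹) := by rw [smul_mul_assoc]
  constructor
  · exact ⟨a, Dm * T * Dm⁻¹, ⟨Dm, hU, rfl⟩, hmat⟩
  · simp only [Set.mem_singleton_iff]
    intro h0
    rw [hmat] at h0
    have hX : Dm * T * Dm⁻¹ = 0 := by
      rcases smul_eq_zero.mp h0 with h | h
      · exact absurd h ha
      · exact h
    apply hT
    calc T = (Dm⁻¹ * Dm) * T * (Dm⁻¹ * Dm) := by rw [hDD', one_mul, mul_one]
      _ = Dm⁻¹ * (Dm * T * Dm⁻¹) * Dm := by simp only [mul_assoc]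
      _ = 0 := by rw [hX]; simp

lemma caseB (T : Matrix (Fin n) (Fin n) ℝ) (E : Vn n ≃ₗ[ℝ] Vn n)
    (ha : (E (1, 0)).1 = 0) :
    (∃ x y : Fin n → ℝ, LinearMap.toMatrix' (MlinOf T E) = Matrix.vecMulVec x y ∧
      y ⬝ᵥ x = 0) ∧
    (∀ c : ℝ, T = c • (1 : Matrix (Fin n) (Fin n) ℝ) →
      LinearMap.toMatrix' (MlinOf T E) = 0) := by
  set v := (E (1, 0)).2 with hv
  set x := DlinOf E (T *ᵥ v) with hx
  set y : Fin n → ℝ := fun j => -(E (0, Pi.single j 1)).1 with hy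
  have happ : ∀ w : Fin n → ℝ, MlinOf T E w = (-(E (0, w)).1) • x := by
    intro w
    rw [MlinOf_apply]
    have hb : gTBracket T (E (1, 0)) (E (0, w)) = (-(E (0, w)).1) • ((0 : ℝ), T *ᵥ v) := by
      simp [gTBracket, ha, Prod.smul_mk, ← hv, neg_smul]
    rw [hb, _root_.map_smul, hx, DlinOf_apply]
    rfl
  have hmat : LinearMap.toMatrix' (MlinOf T E) = Matrix.vecMulVec x y := by
    ext i j
    rw [toMatrix'_apply_single, happ, Matrix.vecMulVec_apply]
    simp [hy, mul_comm]
  have hEx : ∀ z : Fin n → ℝ, (E (0, DlinOf E z)).1 = 0 := by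
    intro z
    rw [key1]
    have h7 : (((0, z) : Vn n) - ((E.symm (0, z)).1) • E (1, 0)).1
        = 0 - (E.symm (0, z)).1 * (E (1, 0)).1 := rfl
    rw [h7, ha, mul_zero, sub_zero]
  have hlin : ∀ z : Fin n → ℝ, y ⬝ᵥ z = -(E (0, z)).1 := by
    intro z
    have h2 : ∀ j : Fin n, z j • ((0, Pi.single j 1) : Vn n) = ((0:ℝ), Pi.single j (z j)) := by
      intro j
      rw [Prod.ext_iff]
      refine ⟨by simp, ?_⟩
      show z j • (Pi.single j 1 : Fin n → ℝ) = Pi.single j (z j)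
      ext m
      simp [Pi.single_apply, mul_comm]
    have hz : ((0, z) : Vn n) = ∑ j, z j • ((0, Pi.single j 1) : Vn n) := by
      simp only [h2]
      rw [Prod.ext_iff]
      refine ⟨?_, ?_⟩
      · rw [Prod.fst_sum]; simp
      · rw [Prod.snd_sum]
        exact (Finset.univ_sum_single z).symm
    rw [hz, map_sum, Prod.fst_sum]
    simp only [_root_.map_smul, Prod.smul_fst, smul_eq_mul]
    rw [dotProduct, ← Finset.sum_neg_distrib]
    apply Finset.sum_congr rfl
    intro j _
    simp only [hy]
    ring
  have hyx : y ⬝ᵥ x = 0 := by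
    rw [hlin x, hx, hEx, neg_zero]
  refine ⟨⟨x, y, hmat, hyx⟩, ?_⟩
  intro c hc
  have hv' : T *ᵥ v = c • v := by
    rw [hc, Matrix.smul_mulVec, Matrix.one_mulVec]
  have hE10 : ((0 : ℝ), v) = E (1, 0) := by
    rw [Prod.ext_iff]
    exact ⟨ha.symm, rfl⟩
  have hDv : DlinOf E v = 0 := by
    rw [DlinOf_apply, hE10, E.symm_apply_apply]
  have hx0 : x = 0 := by
    rw [hx, hv', _root_.map_smul, hDv, smul_zero]
  rw [hmat, hx0]
  ext i j
  simp [Matrix.vecMulVec_apply]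

end CaseLemmas


section Branch2

open Matrix AuxContraction

variable {n : ℕ}

lemma stdval (i1 i0 a b : Fin n) : Matrix.single i1 i0 (1:ℝ) a b
    = if a = i1 ∧ b = i0 then 1 else 0 := by
  show (if i1 = a ∧ i0 = b then (1:ℝ) else 0) = if a = i1 ∧ b = i0 then 1 else 0
  split_ifs with hc1 hc2 hc2
  · rfl
  · exact absurd ⟨hc1.1.symm, hc1.2.symm⟩ hc2
  · exact absurd ⟨hc2.1.symm, hc2.2.symm⟩ hc1
  · rfl

/-- Rank-one square-zero matrices, described by closed conditions. -/
def Kset (n : ℕ) : Set (Matrix (Fin n) (Fin n) ℝ) :=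
  {A | A * A = 0 ∧ ∀ i j k l, A i j * A k l = A i l * A k j}

lemma isClosed_Kset : IsClosed (Kset n) := by
  have h1 : IsClosed {A : Matrix (Fin n) (Fin n) ℝ | A * A = 0} :=
    isClosed_eq (continuous_id.matrix_mul continuous_id) continuous_const
  have h2 : ∀ p : (Fin n × Fin n) × (Fin n × Fin n),
      IsClosed {A : Matrix (Fin n) (Fin n) ℝ |
        A p.1.1 p.1.2 * A p.2.1 p.2.2 = A p.1.1 p.2.2 * A p.2.1 p.1.2} := by
    intro p
    apply isClosed_eq
    · exact (continuous_id.matrix_elem _ _).mul (continuous_id.matrix_elem _ _)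
    · exact (continuous_id.matrix_elem _ _).mul (continuous_id.matrix_elem _ _)
  have hset : Kset n = {A : Matrix (Fin n) (Fin n) ℝ | A * A = 0} ∩
      ⋂ p : (Fin n × Fin n) × (Fin n × Fin n),
        {A : Matrix (Fin n) (Fin n) ℝ |
          A p.1.1 p.1.2 * A p.2.1 p.2.2 = A p.1.1 p.2.2 * A p.2.1 p.1.2} := by
    ext A
    simp only [Kset, Set.mem_setOf_eq, Set.mem_inter_iff, Set.mem_iInter, Prod.forall]
  rw [hset]
  exact h1.inter (isClosed_iInter h2)

lemma vecMulVec_mem_Kset (x y : Fin n → ℝ) (h : y ⬝ᵥ x = 0) :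
    Matrix.vecMulVec x y ∈ Kset n := by
  constructor
  · ext i j
    rw [Matrix.mul_apply]
    simp only [Matrix.vecMulVec_apply, Matrix.zero_apply]
    calc ∑ k, x i * y k * (x k * y j) = (x i * y j) * ∑ k, y k * x k := by
          rw [Finset.mul_sum]
          apply Finset.sum_congr rfl
          intro k _
          ring
      _ = 0 := by
          rw [show (∑ k, y k * x k) = y ⬝ᵥ x from rfl, h, mul_zero]
  · intro i j k l
    simp only [Matrix.vecMulVec_apply]
    ring

lemma kset_structure (S : Matrix (Fin n) (Fin n) ℝ) (hS : S ≠ 0) (hK : S ∈ Kset n) :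
    ∃ (p q : Fin n → ℝ) (i₀ j' : Fin n), S = Matrix.vecMulVec p q ∧ q ⬝ᵥ p = 0 ∧
      q i₀ ≠ 0 ∧ p j' ≠ 0 ∧ j' ≠ i₀ := by
  obtain ⟨a, b, hab⟩ : ∃ a b, S a b ≠ 0 := by
    by_contra hc
    push_neg at hc
    apply hS
    ext a b
    simpa using hc a b
  set p : Fin n → ℝ := fun k => S k b with hp
  set q : Fin n → ℝ := fun l => S a l / S a b with hq
  have hSpq : S = Matrix.vecMulVec p q := by
    ext k l
    rw [Matrix.vecMulVec_apply]
    simp only [hp, hq]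
    rw [← mul_div_assoc, eq_div_iff hab]
    linear_combination -hK.2 a l k b
  have hqp : q ⬝ᵥ p = 0 := by
    have h0 : ∑ l, S a l * S l b = 0 := by
      have := congrFun (congrFun hK.1 a) b
      rw [Matrix.mul_apply] at this
      simpa using this
    rw [dotProduct]
    simp only [hp, hq]
    calc ∑ l, S a l / S a b * S l b = (∑ l, S a l * S l b) / S a b := by
          rw [Finset.sum_div]
          apply Finset.sum_congr rfl
          intro l _
          ring
      _ = 0 := by rw [h0, zero_div]
  have hqb : q b ≠ 0 := by
    simp only [hq]
    rw [div_self hab]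
    exact one_ne_zero
  obtain ⟨j', hj'1, hj'2⟩ : ∃ j', p j' ≠ 0 ∧ j' ≠ b := by
    by_cases hab' : a = b
    · by_contra hc
      push_neg at hc
      have hpb : p b = 0 := by
        have h00 : q ⬝ᵥ p = q b * p b := by
          rw [dotProduct]
          apply Finset.sum_eq_single b
          · intro l _ hl
            have hpl : p l = 0 := by
              by_contra hplne
              exact hl (hc l hplne)
            rw [hpl, mul_zero]
          · intro hmem
            exact absurd (Finset.mem_univ b) hmem
        have := hqp
        rw [h00] at this
        rcases mul_eq_zero.mp this with h | h
        · exact absurd h hqb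
        · exact h
      apply hab
      rw [hab']
      exact hpb
    · exact ⟨a, by simpa [hp] using hab, hab'⟩
  exact ⟨p, q, b, j', hSpq, hqp, hqb, hj'1, hj'2⟩

lemma exists_perm_two {α : Type*} [DecidableEq α] (i0 i1 a b : α) (h01 : i0 ≠ i1)
    (hab : a ≠ b) : ∃ e : Equiv.Perm α, e i0 = a ∧ e i1 = b := by
  have hb'0 : (Equiv.swap i0 a).symm b ≠ i0 := by
    intro hcon
    apply hab
    have h := congrArg (Equiv.swap i0 a) hcon
    rw [Equiv.apply_symm_apply, Equiv.swap_apply_left] at h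
    exact h.symm
  refine ⟨(Equiv.swap i1 ((Equiv.swap i0 a).symm b)).trans (Equiv.swap i0 a), ?_, ?_⟩
  · rw [Equiv.trans_apply, Equiv.swap_apply_of_ne_of_ne h01 (Ne.symm hb'0),
      Equiv.swap_apply_left]
  · rw [Equiv.trans_apply, Equiv.swap_apply_left, Equiv.apply_symm_apply]

lemma sum_split (F : Fin n → ℝ) (i0 i1 : Fin n) (h01 : i0 ≠ i1) :
    ∑ k, F k = F i0 + F i1 + ∑ k ∈ (Finset.univ.erase i0).erase i1, F k := by
  rw [← Finset.add_sum_erase _ F (Finset.mem_univ i0)]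
  rw [← Finset.add_sum_erase _ F (Finset.mem_erase.mpr ⟨Ne.symm h01, Finset.mem_univ i1⟩)]
  rw [add_assoc]

lemma li_family (w w' : Fin n → ℝ) (iw jw : Fin n) (hij : iw ≠ jw)
    (hdet : w iw * w' jw - w jw * w' iw ≠ 0)
    (i0 i1 : Fin n) (h01 : i0 ≠ i1) (e : Equiv.Perm (Fin n)) (he0 : e i0 = iw)
    (he1 : e i1 = jw) :
    LinearIndependent ℝ
      (fun k => if k = i0 then w else if k = i1 then w' else Pi.single (e k) 1) := by
  set col : Fin n → (Fin n → ℝ) :=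
    fun k => if k = i0 then w else if k = i1 then w' else Pi.single (e k) 1 with hcol
  rw [Fintype.linearIndependent_iff]
  intro g hg
  have heval : ∀ m : Fin n, ∑ k, g k * col k m = 0 := by
    intro m
    have := congrFun hg m
    simpa [Finset.sum_apply] using this
  have hsplit : ∀ m : Fin n, ∑ k, g k * col k m
      = g i0 * w m + g i1 * w' m + ∑ k ∈ (Finset.univ.erase i0).erase i1, g k * col k m := by
    intro m
    rw [sum_split (fun k => g k * col k m) i0 i1 h01]
    simp [hcol, h01, (Ne.symm h01)]
  have hrest : ∀ m : Fin n, (∀ k, k ≠ i0 → k ≠ i1 → e k ≠ m) →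
      ∑ k ∈ (Finset.univ.erase i0).erase i1, g k * col k m = 0 := by
    intro m hm
    apply Finset.sum_eq_zero
    intro k hk
    have hk1 : k ≠ i1 := (Finset.mem_erase.mp hk).1
    have hk0 : k ≠ i0 := (Finset.mem_erase.mp (Finset.mem_erase.mp hk).2).1
    have : col k m = 0 := by
      simp only [hcol, if_neg hk0, if_neg hk1]
      exact Pi.single_eq_of_ne (Ne.symm (hm k hk0 hk1)) 1
    rw [this, mul_zero]
  have hEqI : g i0 * w iw + g i1 * w' iw = 0 := by
    have := heval iw
    rw [hsplit iw, hrest iw ?_] at this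
    · simpa using this
    · intro k hk0 hk1 hcon
      exact hk0 (e.injective (by rw [hcon, he0]))
  have hEqJ : g i0 * w jw + g i1 * w' jw = 0 := by
    have := heval jw
    rw [hsplit jw, hrest jw ?_] at this
    · simpa using this
    · intro k hk0 hk1 hcon
      exact hk1 (e.injective (by rw [hcon, he1]))
  have hg0 : g i0 = 0 := by
    have hmul : g i0 * (w iw * w' jw - w jw * w' iw) = 0 := by
      linear_combination w' jw * hEqI - w' iw * hEqJ
    rcases mul_eq_zero.mp hmul with hh | hh
    · exact hh
    · exact absurd hh hdet
  have hg1 : g i1 = 0 := by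
    have hmul : g i1 * (w iw * w' jw - w jw * w' iw) = 0 := by
      linear_combination w iw * hEqJ - w jw * hEqI
    rcases mul_eq_zero.mp hmul with hh | hh
    · exact hh
    · exact absurd hh hdet
  intro k
  by_cases hk0 : k = i0
  · rw [hk0]; exact hg0
  by_cases hk1 : k = i1
  · rw [hk1]; exact hg1
  have := heval (e k)
  rw [hsplit (e k), hg0, hg1, zero_mul, zero_mul, zero_add, zero_add] at this
  rw [Finset.sum_eq_single_of_mem k ?_ ?_] at this
  · have hck : col k (e k) = 1 := by
      simp only [hcol, if_neg hk0, if_neg hk1]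
      simp
    rw [hck, mul_one] at this
    exact this
  · exact Finset.mem_erase.mpr ⟨hk1, Finset.mem_erase.mpr ⟨hk0, Finset.mem_univ k⟩⟩
  · intro k' hk' hkk'
    have hk'1 : k' ≠ i1 := (Finset.mem_erase.mp hk').1
    have hk'0 : k' ≠ i0 := (Finset.mem_erase.mp (Finset.mem_erase.mp hk').2).1
    have : col k' (e k) = 0 := by
      simp only [hcol, if_neg hk'0, if_neg hk'1]
      have hne : e k ≠ e k' := fun hcon => hkk' (e.injective hcon).symm
      exact Pi.single_eq_of_ne hne 1
    rw [this, mul_zero]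

lemma li_familyP (p q : Fin n → ℝ) (i₀ j' : Fin n) (hp : p j' ≠ 0)
    (hne : j' ≠ i₀) (i0 i1 : Fin n) (h01 : i0 ≠ i1) (e : Equiv.Perm (Fin n))
    (he0 : e i0 = i₀) (he1 : e i1 = j') :
    LinearIndependent ℝ (fun k => if k = i0 then (Pi.single i₀ 1 : Fin n → ℝ)
      else if k = i1 then p
      else (Pi.single (e k) 1 : Fin n → ℝ) - (q (e k) / q i₀) • (Pi.single i₀ 1 : Fin n → ℝ)) := by
  set col : Fin n → (Fin n → ℝ) := fun k => if k = i0 then (Pi.single i₀ 1 : Fin n → ℝ)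
      else if k = i1 then p
      else (Pi.single (e k) 1 : Fin n → ℝ) - (q (e k) / q i₀) • (Pi.single i₀ 1 : Fin n → ℝ) with hcol
  rw [Fintype.linearIndependent_iff]
  intro g hg
  have heval : ∀ m : Fin n, ∑ k, g k * col k m = 0 := by
    intro m
    have := congrFun hg m
    simpa [Finset.sum_apply] using this
  have hsplit : ∀ m : Fin n, ∑ k, g k * col k m
      = g i0 * (Pi.single i₀ 1 : Fin n → ℝ) m + g i1 * p m
        + ∑ k ∈ (Finset.univ.erase i0).erase i1, g k * col k m := by
    intro m
    rw [sum_split (fun k => g k * col k m) i0 i1 h01]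
    simp [hcol, h01, Ne.symm h01]
  have hcother : ∀ k, k ≠ i0 → k ≠ i1 → ∀ m, m ≠ e k → m ≠ i₀ → col k m = 0 := by
    intro k hk0 hk1 m hm1 hm2
    simp only [hcol, if_neg hk0, if_neg hk1, Pi.sub_apply, Pi.smul_apply, smul_eq_mul]
    rw [Pi.single_eq_of_ne hm1 1, Pi.single_eq_of_ne hm2 1, mul_zero, sub_zero]
  have hg1 : g i1 = 0 := by
    have h := heval j'
    rw [hsplit j'] at h
    have hzero : ∑ k ∈ (Finset.univ.erase i0).erase i1, g k * col k j' = 0 := by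
      apply Finset.sum_eq_zero
      intro k hk
      have hk1 : k ≠ i1 := (Finset.mem_erase.mp hk).1
      have hk0 : k ≠ i0 := (Finset.mem_erase.mp (Finset.mem_erase.mp hk).2).1
      have hne2 : j' ≠ e k := fun hcon => hk1 (e.injective (by rw [← hcon, he1]))
      rw [hcother k hk0 hk1 j' hne2 hne, mul_zero]
    rw [Pi.single_eq_of_ne hne 1, mul_zero, zero_add, hzero, add_zero] at h
    rcases mul_eq_zero.mp h with hh | hh
    · exact hh
    · exact absurd hh hp
  have hgk : ∀ k, k ≠ i0 → k ≠ i1 → g k = 0 := by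
    intro k hk0 hk1
    have h := heval (e k)
    rw [hsplit (e k)] at h
    have hs1 : (Pi.single i₀ 1 : Fin n → ℝ) (e k) = 0 := by
      apply Pi.single_eq_of_ne
      intro hcon
      exact hk0 (e.injective (by rw [hcon, he0]))
    have hsum : ∑ k' ∈ (Finset.univ.erase i0).erase i1, g k' * col k' (e k)
        = g k * col k (e k) := by
      apply Finset.sum_eq_single_of_mem k
        (Finset.mem_erase.mpr ⟨hk1, Finset.mem_erase.mpr ⟨hk0, Finset.mem_univ k⟩⟩)
      intro k' hk' hkk'
      have hk'1 : k' ≠ i1 := (Finset.mem_erase.mp hk').1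
      have hk'0 : k' ≠ i0 := (Finset.mem_erase.mp (Finset.mem_erase.mp hk').2).1
      have hne1 : e k ≠ e k' := fun hcon => hkk' (e.injective hcon).symm
      have hne2 : e k ≠ i₀ := fun hcon => hk0 (e.injective (by rw [hcon, he0]))
      rw [hcother k' hk'0 hk'1 (e k) hne1 hne2, mul_zero]
    have hck : col k (e k) = 1 := by
      simp only [hcol, if_neg hk0, if_neg hk1, Pi.sub_apply, Pi.smul_apply, smul_eq_mul]
      rw [Pi.single_eq_same, hs1, mul_zero, sub_zero]
    rw [hs1, mul_zero, zero_add, hg1, zero_mul, zero_add, hsum, hck, mul_one] at h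
    exact h
  have hg0 : g i0 = 0 := by
    have h := heval i₀
    rw [hsplit i₀] at h
    have hzero : ∑ k ∈ (Finset.univ.erase i0).erase i1, g k * col k i₀ = 0 := by
      apply Finset.sum_eq_zero
      intro k hk
      have hk1 : k ≠ i1 := (Finset.mem_erase.mp hk).1
      have hk0 : k ≠ i0 := (Finset.mem_erase.mp (Finset.mem_erase.mp hk).2).1
      rw [hgk k hk0 hk1, zero_mul]
    rw [hzero, add_zero, hg1, zero_mul, add_zero, Pi.single_eq_same, mul_one] at h
    exact h
  intro k
  by_cases hk0 : k = i0
  · rw [hk0]; exact hg0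
  by_cases hk1 : k = i1
  · rw [hk1]; exact hg1
  exact hgk k hk0 hk1

lemma exists_unit_matrix (hn : 0 < n) {col : Fin n → (Fin n → ℝ)}
    (h : LinearIndependent ℝ col) :
    ∃ P : Matrix (Fin n) (Fin n) ℝ, IsUnit P ∧ ∀ i j, P i j = col j i := by
  haveI : Nonempty (Fin n) := ⟨⟨0, hn⟩⟩
  have hcard : Fintype.card (Fin n) = Module.finrank ℝ (Fin n → ℝ) := by
    simp [Module.finrank_fin_fun]
  let bas := basisOfLinearIndependentOfCardEqFinrank h hcard
  have hbas : ∀ k, bas k = col k := fun k =>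
    congrFun (coe_basisOfLinearIndependentOfCardEqFinrank h hcard) k
  let eqv := (Pi.basisFun ℝ (Fin n)).equiv bas (Equiv.refl _)
  refine ⟨LinearMap.toMatrix' eqv.toLinearMap, ?_, ?_⟩
  · refine (Matrix.isUnit_iff_isUnit_det _).mpr (Matrix.isUnit_det_of_right_inverse (B := LinearMap.toMatrix' eqv.symm.toLinearMap) ?_)
    rw [← LinearMap.toMatrix'_comp]
    have hcomp : eqv.toLinearMap ∘ₗ eqv.symm.toLinearMap = LinearMap.id := by
      apply LinearMap.ext
      intro z
      show eqv (eqv.symm z) = z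
      exact eqv.apply_symm_apply z
    rw [hcomp, LinearMap.toMatrix'_id]
  · intro i j
    rw [toMatrix'_apply_single]
    show eqv (Pi.single j 1) i = col j i
    have h2 : (Pi.single j 1 : Fin n → ℝ) = (Pi.basisFun ℝ (Fin n)) j :=
      (Pi.basisFun_apply ℝ (Fin n) j).symm
    have h3 : eqv ((Pi.basisFun ℝ (Fin n)) j) = bas (Equiv.refl _ j) :=
      (Pi.basisFun ℝ (Fin n)).equiv_apply j bas (Equiv.refl _)
    rw [h2, h3]
    exact congrFun (hbas j) i

lemma conj_ne_zero {G T : Matrix (Fin n) (Fin n) ℝ} (hG : IsUnit G) (hT : T ≠ 0) :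
    G * T * G⁻¹ ≠ 0 := by
  have hGd : IsUnit G.det := (Matrix.isUnit_iff_isUnit_det G).mp hG
  have e1 : G⁻¹ * G = 1 := Matrix.nonsing_inv_mul G hGd
  intro h0
  apply hT
  calc T = (G⁻¹ * G) * T * (G⁻¹ * G) := by rw [e1, one_mul, mul_one]
    _ = G⁻¹ * (G * T * G⁻¹) * G := by simp only [mul_assoc]
    _ = 0 := by rw [h0]; simp

lemma exists_good_vector (T : Matrix (Fin n) (Fin n) ℝ)
    (hns : ∀ c : ℝ, T ≠ c • (1 : Matrix (Fin n) (Fin n) ℝ)) (hn : 0 < n) :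
    ∃ (w : Fin n → ℝ) (iw jw : Fin n), iw ≠ jw ∧
      w iw * (T *ᵥ w) jw - w jw * (T *ᵥ w) iw ≠ 0 := by
  by_cases hcol : ∀ l i : Fin n, i ≠ l → T i l = 0
  · by_cases hdiag : ∀ i j : Fin n, T i i = T j j
    · exfalso
      set i00 : Fin n := ⟨0, hn⟩
      apply hns (T i00 i00)
      ext i j
      by_cases hij : i = j
      · subst hij
        simp only [Matrix.smul_apply, Matrix.one_apply_eq, smul_eq_mul, mul_one]
        exact hdiag i i00
      · rw [hcol j i hij]
        simp [Matrix.one_apply_ne hij]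
    · push_neg at hdiag
      obtain ⟨i, j, hij'⟩ := hdiag
      have hij : i ≠ j := by
        rintro rfl
        exact hij' rfl
      have hTji : T j i = 0 := hcol i j (Ne.symm hij)
      have hTij : T i j = 0 := hcol j i hij
      set wv : Fin n → ℝ := (Pi.single i 1 : Fin n → ℝ) + Pi.single j 1 with hwv
      refine ⟨wv, i, j, hij, ?_⟩
      have h1 : wv i = 1 := by
        simp [hwv, Pi.single_eq_of_ne hij 1]
      have h2 : wv j = 1 := by
        simp [hwv, Pi.single_eq_of_ne (Ne.symm hij) 1]
      have hwj : (T *ᵥ wv) j = T j j := by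
        rw [hwv, Matrix.mulVec_add, Matrix.mulVec_single, Matrix.mulVec_single]
        simp [hTji]
      have hwi : (T *ᵥ wv) i = T i i := by
        rw [hwv, Matrix.mulVec_add, Matrix.mulVec_single, Matrix.mulVec_single]
        simp [hTij]
      rw [h1, h2, hwj, hwi]
      simpa using sub_ne_zero.mpr (Ne.symm hij')
  · push_neg at hcol
    obtain ⟨l, i, hil, hTil⟩ := hcol
    refine ⟨Pi.single l 1, i, l, hil, ?_⟩
    rw [Matrix.mulVec_single]
    have h1 : (Pi.single l 1 : Fin n → ℝ) i = 0 := Pi.single_eq_of_ne hil 1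
    have h2 : (Pi.single l 1 : Fin n → ℝ) l = 1 := Pi.single_eq_same l 1
    rw [h1, h2]
    simp only [mul_one, zero_mul, zero_sub, neg_ne_zero]
    simpa using hTil

lemma matrix_ext_col {A B : Matrix (Fin n) (Fin n) ℝ}
    (h : ∀ k, A *ᵥ Pi.single k 1 = B *ᵥ Pi.single k 1) : A = B := by
  ext i k
  have := congrFun (h k) i
  rw [Matrix.mulVec_single, Matrix.mulVec_single] at this
  simpa using this

lemma tendsto_Y (B : Matrix (Fin n) (Fin n) ℝ) (i0 i1 : Fin n) (h01 : i0 ≠ i1)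
    (hB : ∀ i, B i i0 = if i = i1 then 1 else 0) :
    Tendsto (fun t : ℝ => t • (Matrix.diagonal (fun k => if k = i0 then t else 1) * B *
        Matrix.diagonal (fun k => if k = i0 then t⁻¹ else 1))) (𝓝[≠] (0:ℝ))
      (𝓝 (Matrix.single i1 i0 1)) := by
  have hev : ∀ᶠ t in 𝓝[≠] (0:ℝ), t ≠ 0 := by
    filter_upwards [eventually_mem_nhdsWithin] with t ht
    simpa using ht
  apply tendsto_pi_nhds.mpr
  intro i
  rw [tendsto_pi_nhds]
  intro j
  have hentry : ∀ t : ℝ, (t • (Matrix.diagonal (fun k => if k = i0 then t else 1) * B *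
      Matrix.diagonal (fun k => if k = i0 then t⁻¹ else 1))) i j
      = t * ((if i = i0 then t else 1) * B i j * (if j = i0 then t⁻¹ else 1)) := by
    intro t
    rw [Matrix.smul_apply, Matrix.mul_diagonal, Matrix.diagonal_mul, smul_eq_mul]
  have hstdval : ∀ a b : Fin n, Matrix.single i1 i0 (1:ℝ) a b
      = if a = i1 ∧ b = i0 then 1 else 0 := by
    intro a b
    show (if i1 = a ∧ i0 = b then (1:ℝ) else 0) = if a = i1 ∧ b = i0 then 1 else 0
    split_ifs with hc1 hc2 hc2
    · rfl
    · exact absurd ⟨hc1.1.symm, hc1.2.symm⟩ hc2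
    · exact absurd ⟨hc2.1.symm, hc2.2.symm⟩ hc1
    · rfl
  by_cases hj : j = i0
  · by_cases hi : i = i0
    · have hB0 : B i j = 0 := by
        rw [hj, hB i, hi, if_neg h01]
      have hfun : ∀ t : ℝ, (t • (Matrix.diagonal (fun k => if k = i0 then t else 1) * B *
          Matrix.diagonal (fun k => if k = i0 then t⁻¹ else 1))) i j = 0 := by
        intro t
        rw [hentry t, hB0]
        ring
      have hstd : Matrix.single i1 i0 (1:ℝ) i j = 0 := by
        rw [hstdval]
        have hc : ¬(i = i1 ∧ j = i0) := by
          rintro ⟨hc1, -⟩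
          exact h01 (hi.symm.trans hc1)
        rw [if_neg hc]
      rw [hstd]
      exact Tendsto.congr (fun t => (hfun t).symm) tendsto_const_nhds
    · have hstd : Matrix.single i1 i0 (1:ℝ) i j = B i i0 := by
        rw [hstdval, hB i]
        by_cases hii : i = i1
        · rw [if_pos ⟨hii, hj⟩, if_pos hii]
        · rw [if_neg (fun hc => hii hc.1), if_neg hii]
      rw [hstd]
      apply Tendsto.congr' ?_ (tendsto_const_nhds (x := B i i0))
      filter_upwards [hev] with t ht
      rw [hentry t, if_neg hi, if_pos hj, hj]
      field_simp
  · have hstd : Matrix.single i1 i0 (1:ℝ) i j = 0 := by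
      rw [hstdval, if_neg (fun hc => hj hc.2)]
    rw [hstd]
    by_cases hi : i = i0
    · have hcont : Continuous (fun t : ℝ => t * (t * B i j * 1)) := by fun_prop
      have h0 : (fun t : ℝ => t * (t * B i j * 1)) 0 = 0 := by simp
      have hbase := (hcont.tendsto' 0 0 h0).mono_left (nhdsWithin_le_nhds (s := {(0:ℝ)}ᶜ))
      apply Tendsto.congr ?_ hbase
      intro t
      rw [hentry t, if_neg hj, if_pos hi]
    · have hcont : Continuous (fun t : ℝ => t * (1 * B i j * 1)) := by fun_prop
      have h0 : (fun t : ℝ => t * (1 * B i j * 1)) 0 = 0 := by simp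
      have hbase := (hcont.tendsto' 0 0 h0).mono_left (nhdsWithin_le_nhds (s := {(0:ℝ)}ᶜ))
      apply Tendsto.congr ?_ hbase
      intro t
      rw [hentry t, if_neg hj, if_neg hi]

lemma mem_closure_of_Kset (T Sm : Matrix (Fin n) (Fin n) ℝ) (hT : T ≠ 0) (hS : Sm ≠ 0)
    (hns : ∀ c : ℝ, T ≠ c • (1 : Matrix (Fin n) (Fin n) ℝ)) (hK : Sm ∈ Kset n) :
    Sm ∈ closure (doubleCone T \ {0}) := by
  obtain ⟨p, q, i₀, j', hSpq, hqp, hqi, hpj, hji⟩ := kset_structure Sm hS hK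
  have hn2 : 2 ≤ n := by
    by_contra hcon
    push_neg at hcon
    apply hji
    have hj1 : (j' : ℕ) < n := j'.isLt
    have hj2 : (i₀ : ℕ) < n := i₀.isLt
    exact Fin.ext (by omega)
  set i0 : Fin n := ⟨0, by omega⟩ with hi0
  set i1 : Fin n := ⟨1, by omega⟩ with hi1
  have h01 : i0 ≠ i1 := by
    intro hcon
    have := congrArg Fin.val hcon
    simp [hi0, hi1] at this
  obtain ⟨w, iw, jw, hij, hdet⟩ := exists_good_vector T hns (by omega)
  obtain ⟨eR, heR0, heR1⟩ := exists_perm_two i0 i1 iw jw h01 hij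
  obtain ⟨eP, heP0, heP1⟩ := exists_perm_two i0 i1 i₀ j' h01 (Ne.symm hji)
  have liR := li_family w (T *ᵥ w) iw jw hij hdet i0 i1 h01 eR heR0 heR1
  obtain ⟨R, hRu, hRe⟩ := exists_unit_matrix (by omega) liR
  have liP := li_familyP p q i₀ j' hpj hji i0 i1 h01 eP heP0 heP1
  obtain ⟨P, hPu, hPe⟩ := exists_unit_matrix (by omega) liP
  have hRdet : IsUnit R.det := (Matrix.isUnit_iff_isUnit_det R).mp hRu
  have hPdet : IsUnit P.det := (Matrix.isUnit_iff_isUnit_det P).mp hPu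
  have hRinv : R⁻¹ * R = 1 := Matrix.nonsing_inv_mul R hRdet
  have hRinv' : R * R⁻¹ = 1 := Matrix.mul_nonsing_inv R hRdet
  have hPinv : P⁻¹ * P = 1 := Matrix.nonsing_inv_mul P hPdet
  have hPinv' : P * P⁻¹ = 1 := Matrix.mul_nonsing_inv P hPdet
  have hRcol : ∀ k, R *ᵥ Pi.single k 1
      = (if k = i0 then w else if k = i1 then T *ᵥ w else Pi.single (eR k) 1) := by
    intro k
    funext i
    simp only [Matrix.mulVec_single_one, Matrix.col_apply]
    exact hRe i k
  have hPcol : ∀ k, P *ᵥ Pi.single k 1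
      = (if k = i0 then (Pi.single i₀ 1 : Fin n → ℝ) else if k = i1 then p
        else (Pi.single (eP k) 1 : Fin n → ℝ)
          - (q (eP k) / q i₀) • (Pi.single i₀ 1 : Fin n → ℝ)) := by
    intro k
    funext i
    simp only [Matrix.mulVec_single_one, Matrix.col_apply]
    exact hPe i k
  set B := R⁻¹ * T * R with hB
  have hBcol : ∀ i, B i i0 = if i = i1 then 1 else 0 := by
    intro i
    have hmv : B *ᵥ Pi.single i0 1 = Pi.single i1 1 := by
      rw [hB, ← Matrix.mulVec_mulVec, ← Matrix.mulVec_mulVec, hRcol i0, if_pos rfl]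
      have h2 : T *ᵥ w = R *ᵥ Pi.single i1 1 := by
        rw [hRcol i1, if_neg (Ne.symm h01), if_pos rfl]
      rw [h2, Matrix.mulVec_mulVec, hRinv, Matrix.one_mulVec]
    have := congrFun hmv i
    simp only [Matrix.mulVec_single_one, Matrix.col_apply] at this
    rw [this, Pi.single_apply]
  have hsvm : ∀ z : Fin n → ℝ, Sm *ᵥ z = (q ⬝ᵥ z) • p := by
    intro z
    funext i
    have h1 : (Sm *ᵥ z) i = ∑ k, p i * q k * z k := by
      rw [hSpq]
      simp [Matrix.mulVec, dotProduct, Matrix.vecMulVec_apply]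
    rw [h1]
    have h2 : ((q ⬝ᵥ z) • p) i = (∑ k, q k * z k) * p i := by
      simp [dotProduct]
    rw [h2, Finset.sum_mul]
    apply Finset.sum_congr rfl
    intro k _
    ring
  set N := Matrix.single i1 i0 (1:ℝ) with hN
  have hNcol : ∀ k, N *ᵥ Pi.single k 1
      = if k = i0 then (Pi.single i1 1 : Fin n → ℝ) else 0 := by
    intro k
    funext i
    simp only [Matrix.mulVec_single_one, Matrix.col_apply, hN]
    rw [stdval]
    by_cases hk : k = i0 <;> by_cases hii : i = i1 <;>
      simp [hk, hii, Pi.single_apply]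
  have hSP : Sm * P = q i₀ • (P * N) := by
    apply matrix_ext_col
    intro k
    rw [← Matrix.mulVec_mulVec, hPcol k, Matrix.smul_mulVec, ← Matrix.mulVec_mulVec,
      hNcol k]
    by_cases hk0 : k = i0
    · rw [if_pos hk0, if_pos hk0]
      have hd : q ⬝ᵥ (Pi.single i₀ 1 : Fin n → ℝ) = q i₀ := by
        rw [dotProduct_single, mul_one]
      rw [hsvm, hd]
      have h3 : P *ᵥ Pi.single i1 1 = p := by
        rw [hPcol i1, if_neg (Ne.symm h01), if_pos rfl]
      rw [h3]
    · rw [if_neg hk0, if_neg hk0, Matrix.mulVec_zero, smul_zero]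
      by_cases hk1 : k = i1
      · rw [if_pos hk1, hsvm, hqp, zero_smul]
      · rw [if_neg hk1, hsvm]
        have hd : q ⬝ᵥ ((Pi.single (eP k) 1 : Fin n → ℝ)
            - (q (eP k) / q i₀) • (Pi.single i₀ 1 : Fin n → ℝ)) = 0 := by
          rw [dotProduct_sub, dotProduct_smul, dotProduct_single,
            dotProduct_single, smul_eq_mul]
          field_simp
          ring
        rw [hd, zero_smul]
  have hSm : Sm = q i₀ • (P * N * P⁻¹) := by
    calc Sm = Sm * (P * P⁻¹) := by rw [hPinv', mul_one]
      _ = (Sm * P) * P⁻¹ := by rw [mul_assoc]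
      _ = (q i₀ • (P * N)) * P⁻¹ := by rw [hSP]
      _ = q i₀ • (P * N * P⁻¹) := by rw [smul_mul_assoc]
  have hYlim := tendsto_Y B i0 i1 h01 hBcol
  have hcont : Continuous (fun M : Matrix (Fin n) (Fin n) ℝ => q i₀ • (P * M * P⁻¹)) :=
    ((continuous_const.matrix_mul continuous_id).matrix_mul continuous_const).const_smul (q i₀)
  have hXlim : Tendsto (fun t : ℝ => q i₀ • (P * (t • (Matrix.diagonal
        (fun k => if k = i0 then t else 1) * B *
        Matrix.diagonal (fun k => if k = i0 then t⁻¹ else 1))) * P⁻¹)) (𝓝[≠] (0:ℝ))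
      (𝓝 (q i₀ • (P * N * P⁻¹))) := (hcont.tendsto N).comp hYlim
  rw [← hSm] at hXlim
  apply mem_closure_of_tendsto hXlim
  filter_upwards [eventually_mem_nhdsWithin] with t ht
  have ht0 : t ≠ 0 := by simpa using ht
  have hdd' : Matrix.diagonal (fun k => if k = i0 then t else 1) *
      Matrix.diagonal (fun k => if k = i0 then t⁻¹ else 1) = 1 := by
    rw [Matrix.diagonal_mul_diagonal]
    have hfun : (fun k => (if k = i0 then t else 1) * (if k = i0 then t⁻¹ else 1))
        = fun _ : Fin n => (1:ℝ) := by
      funext k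
      by_cases hk : k = i0 <;> simp [hk, ht0]
    calc Matrix.diagonal ((fun k => if k = i0 then t else 1) *
          (fun k => if k = i0 then t⁻¹ else 1)) = Matrix.diagonal (fun _ => 1) := by
            rw [show ((fun k => if k = i0 then t else 1) *
              (fun k => if k = i0 then t⁻¹ else 1)) = fun _ : Fin n => (1:ℝ) from hfun]
      _ = 1 := Matrix.diagonal_one
  have hDu : IsUnit (Matrix.diagonal (fun k => if k = i0 then t else 1)) :=
    (Matrix.isUnit_iff_isUnit_det _).mpr (Matrix.isUnit_det_of_right_inverse hdd')
  have hDinv : (Matrix.diagonal (fun k => if k = i0 then t else 1))⁻¹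
      = Matrix.diagonal (fun k => if k = i0 then t⁻¹ else 1) := Matrix.inv_eq_right_inv hdd'
  have hRiu : IsUnit R⁻¹ := (Matrix.isUnit_iff_isUnit_det _).mpr (Matrix.isUnit_det_of_right_inverse hRinv)
  set G := P * Matrix.diagonal (fun k => if k = i0 then t else 1) * R⁻¹ with hG
  have hGu : IsUnit G := (hPu.mul hDu).mul hRiu
  have hGinv : G⁻¹ = R * Matrix.diagonal (fun k => if k = i0 then t⁻¹ else 1) * P⁻¹ := by
    rw [hG, Matrix.mul_inv_rev, Matrix.mul_inv_rev, Matrix.nonsing_inv_nonsing_inv R hRdet,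
      hDinv]
    simp only [mul_assoc]
  have hval : q i₀ • (P * (t • (Matrix.diagonal (fun k => if k = i0 then t else 1) * B *
        Matrix.diagonal (fun k => if k = i0 then t⁻¹ else 1))) * P⁻¹)
      = (q i₀ * t) • (G * T * G⁻¹) := by
    rw [hGinv, hG, hB, mul_smul_comm, smul_mul_assoc, smul_smul]
    congr 1
    simp only [mul_assoc]
  rw [hval]
  constructor
  · exact ⟨q i₀ * t, G * T * G⁻¹, ⟨G, hGu, rfl⟩, rfl⟩
  · simp only [Set.mem_singleton_iff]
    intro h0
    have hqt : q i₀ * t ≠ 0 := mul_ne_zero hqi ht0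
    rcases smul_eq_zero.mp h0 with hh | hh
    · exact hqt hh
    · exact conj_ne_zero hGu hT hh

end Branch2

open Matrix AuxContraction

theorem mem_closure_doubleCone_of_isContractionOf {n : ℕ}
    (T S : Matrix (Fin n) (Fin n) ℝ) (hT : T ≠ 0) (hS : S ≠ 0)
    (h : IsContractionOf (gTBracket T) (gTBracket S)) :
    S ∈ closure (doubleCone T \ {0}) := by
  classical
  obtain ⟨I, hI, C, hC⟩ := h
  haveI : (𝓝[I \ {0}] (0:ℝ)).NeBot := hI
  set F := 𝓝[I \ {0}] (0:ℝ) with hF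
  set Mf : ℝ → Matrix (Fin n) (Fin n) ℝ :=
    fun r => LinearMap.toMatrix' (MlinOf T (C r)) with hMf
  have hMtend : Tendsto Mf F (𝓝 S) := by
    apply tendsto_pi_nhds.mpr
    intro i
    rw [tendsto_pi_nhds]
    intro j
    have h1 := hC (1, 0) (0, Pi.single j 1)
    have hval : gTBracket S (1, 0) (0, Pi.single j 1) = ((0:ℝ), S *ᵥ Pi.single j 1) := by
      simp [gTBracket]
    rw [hval] at h1
    have hcont : Continuous (fun v : ℝ × (Fin n → ℝ) => v.2 i) :=
      (continuous_apply i).comp continuous_snd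
    have h2 := (hcont.tendsto _).comp h1
    have h3 : ∀ r, Mf r i j
        = ((C r).symm (gTBracket T (C r (1, 0)) (C r (0, Pi.single j 1)))).2 i := by
      intro r
      show LinearMap.toMatrix' (MlinOf T (C r)) i j = _
      rw [toMatrix'_apply_single, MlinOf_apply]
    have h5 : Tendsto (fun r => Mf r i j) F (𝓝 ((S *ᵥ Pi.single j 1) i)) :=
      Tendsto.congr (fun r => (h3 r).symm) h2
    have h4 : (S *ᵥ Pi.single j 1) i = S i j := by
      simp only [Matrix.mulVec_single_one, Matrix.col_apply]
    rw [h4] at h5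
    exact h5
  by_cases hcase : (F ⊓ 𝓟 {r : ℝ | ((C r) (1, 0)).1 ≠ 0}).NeBot
  · haveI := hcase
    have htend2 : Tendsto Mf (F ⊓ 𝓟 {r : ℝ | ((C r) (1, 0)).1 ≠ 0}) (𝓝 S) :=
      hMtend.mono_left inf_le_left
    apply mem_closure_of_tendsto htend2
    rw [Filter.eventually_inf_principal]
    apply Eventually.of_forall
    intro r hr
    exact caseA T hT (C r) hr
  · have hbot : F ⊓ 𝓟 {r : ℝ | ((C r) (1, 0)).1 ≠ 0} = ⊥ := not_neBot.mp hcase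
    have hev : ∀ᶠ r in F, ((C r) (1, 0)).1 = 0 := by
      have h5 := Filter.inf_principal_eq_bot.mp hbot
      filter_upwards [h5] with r hr
      simpa using hr
    by_cases hsc : ∃ c : ℝ, T = c • (1 : Matrix (Fin n) (Fin n) ℝ)
    · exfalso
      apply hS
      obtain ⟨c, hc⟩ := hsc
      have hzero : ∀ᶠ r in F, Mf r = 0 := by
        filter_upwards [hev] with r hr
        exact (caseB T (C r) hr).2 c hc
      have h0 : Tendsto Mf F (𝓝 0) := by
        apply Tendsto.congr' ?_ (tendsto_const_nhds (x := (0 : Matrix (Fin n) (Fin n) ℝ)))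
        filter_upwards [hzero] with r hr
        exact hr.symm
      exact tendsto_nhds_unique hMtend h0
    · push_neg at hsc
      apply mem_closure_of_Kset T S hT hS hsc
      have hevK : ∀ᶠ r in F, Mf r ∈ Kset n := by
        filter_upwards [hev] with r hr
        obtain ⟨⟨x, y, hxy, hyx⟩, -⟩ := caseB T (C r) hr
        show LinearMap.toMatrix' (MlinOf T (C r)) ∈ Kset n
        rw [hxy]
        exact vecMulVec_mem_Kset x y hyx
      exact isClosed_Kset.mem_of_tendsto hMtend hevK
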